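/- arXiv:1105.0407 — 4 statements merged into one kernel-verified Lean document; each statement's English description precedes it below -/
import Mathlib

section
/- Let f : ℝ → ℂ be a bounded continuous function with lim_{x→+∞} osc(f, [-2x,-x] ∪ [x,2x]) = 0, where osc(f,J) = sup_{t,τ∈J} |f(t)-f(τ)|. Suppose (h_k) is a real sequence tending to -∞ (or to +∞) such that g := lim_{k→∞} f(h_k) exists. Then for every R > 0, sup_{x ∈ [-R,R]} |f(x + h_k) - g| → 0 as k → ∞. -/
open Filter Set

/-- Oscillation of a function on a set. -/
noncomputable def osc (f : ℝ → ℂ) (J : Set ℝ) : ℝ :=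
  ⨆ t ∈ J, ⨆ τ ∈ J, ‖f t - f τ‖

lemma le_osc (f : ℝ → ℂ) (M : ℝ) (hM : ∀ x, ‖f x‖ ≤ M)
    {J : Set ℝ} {t τ : ℝ} (ht : t ∈ J) (hτ : τ ∈ J) :
    ‖f t - f τ‖ ≤ osc f J := by
  have hM0 : 0 ≤ M := le_trans (norm_nonneg _) (hM 0)
  have hbd : ∀ a b : ℝ, ‖f a - f b‖ ≤ 2 * M := by
    intro a b
    have habs : ‖f a - f b‖ ≤ ‖f a‖ + ‖f b‖ := by
      simpa using norm_sub_le (f a) (f b)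
    have := hM a; have := hM b; linarith
  have h1 : ‖f t - f τ‖ ≤ ⨆ τ' ∈ J, ‖f t - f τ'‖ := by
    have hb : BddAbove (range fun τ' => ⨆ _ : τ' ∈ J, ‖f t - f τ'‖) := by
      refine ⟨2 * M, ?_⟩
      rintro _ ⟨τ', rfl⟩
      exact Real.iSup_le (fun _ => hbd _ _) (by linarith)
    calc ‖f t - f τ‖ ≤ ⨆ _ : τ ∈ J, ‖f t - f τ‖ := by
          rw [ciSup_pos hτ]
    _ ≤ _ := le_ciSup hb τ
  have hb2 : BddAbove (range fun t' => ⨆ _ : t' ∈ J, ⨆ τ' ∈ J, ‖f t' - f τ'‖) := by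
    refine ⟨2 * M, ?_⟩
    rintro _ ⟨t', rfl⟩
    refine Real.iSup_le (fun _ => ?_) (by linarith)
    refine Real.iSup_le (fun τ' => ?_) (by linarith)
    exact Real.iSup_le (fun _ => hbd _ _) (by linarith)
  calc ‖f t - f τ‖ ≤ ⨆ τ' ∈ J, ‖f t - f τ'‖ := h1
  _ ≤ ⨆ _ : t ∈ J, ⨆ τ' ∈ J, ‖f t - f τ'‖ := by rw [ciSup_pos ht]
  _ ≤ osc f J := le_ciSup hb2 t

/-- If `f` is a bounded continuous slowly oscillating function and `h k → ±∞` with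
`f (h k) → g`, then `f (· + h k) → g` uniformly on every `[-R, R]`. -/
theorem slowly_oscillating_uniform_limit
    (f : ℝ → ℂ) (hcont : Continuous f) (hbdd : ∃ M : ℝ, ∀ x, ‖f x‖ ≤ M)
    (hSO : Tendsto (fun x : ℝ => osc f (Icc (-2*x) (-x) ∪ Icc x (2*x))) atTop (nhds 0))
    (h : ℕ → ℝ) (hh : Tendsto h atTop atBot ∨ Tendsto h atTop atTop)
    (g : ℂ) (hg : Tendsto (fun k => f (h k)) atTop (nhds g)) :
    ∀ R > (0:ℝ), ∀ ε > (0:ℝ), ∀ᶠ k in atTop,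
      ∀ x ∈ Icc (-R) R, ‖f (x + h k) - g‖ ≤ ε := by
  intro R hR ε hε
  obtain ⟨M, hM⟩ := hbdd
  have E1 : ∀ᶠ k in atTop, ‖f (h k) - g‖ ≤ ε / 2 := by
    have := (Metric.tendsto_atTop.mp hg (ε / 2) (half_pos hε))
    obtain ⟨N, hN⟩ := this
    refine eventually_atTop.mpr ⟨N, fun k hk => ?_⟩
    have := hN k hk
    rw [Complex.dist_eq] at this
    exact this.le
  rcases hh with hh | hh
  · -- h k → -∞, take t k = -h k - R
    have ht : Tendsto (fun k => -h k - R) atTop atTop := by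
      have : Tendsto (fun k => -h k) atTop atTop := tendsto_neg_atTop_iff.mpr hh
      exact tendsto_atTop_add_const_right _ (-R) this |>.congr (fun k => by ring)
    have E2 : ∀ᶠ k in atTop,
        osc f (Icc (-2 * (-h k - R)) (-(-h k - R)) ∪ Icc (-h k - R) (2 * (-h k - R))) ≤ ε / 2 := by
      have := (hSO.comp ht).eventually (ge_mem_nhds (half_pos hε))
      filter_upwards [this] with k hk using hk
    have E3 : ∀ᶠ k in atTop, h k ≤ -3 * R := hh.eventually (eventually_le_atBot (-3 * R))
    filter_upwards [E1, E2, E3] with k h1 h2 h3 x hx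
    set t := -h k - R with htdef
    have hmem1 : x + h k ∈ Icc (-2 * t) (-t) ∪ Icc t (2 * t) := by
      left; constructor <;> [skip; skip] <;> simp only [htdef] <;>
        [linarith [hx.1]; linarith [hx.2]]
    have hmem2 : h k ∈ Icc (-2 * t) (-t) ∪ Icc t (2 * t) := by
      left; constructor <;> simp only [htdef] <;> linarith
    have tri : ‖f (x + h k) - g‖ ≤
        ‖f (x + h k) - f (h k)‖ + ‖f (h k) - g‖ := by
      have : f (x + h k) - g = (f (x + h k) - f (h k)) + (f (h k) - g) := by ring
      rw [this]; exact norm_add_le _ _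
    have hosc := le_osc f M hM hmem1 hmem2
    linarith
  · -- h k → +∞, take t k = h k - R
    have ht : Tendsto (fun k => h k - R) atTop atTop :=
      tendsto_atTop_add_const_right _ (-R) hh |>.congr (fun k => by ring)
    have E2 : ∀ᶠ k in atTop,
        osc f (Icc (-2 * (h k - R)) (-(h k - R)) ∪ Icc (h k - R) (2 * (h k - R))) ≤ ε / 2 := by
      have := (hSO.comp ht).eventually (ge_mem_nhds (half_pos hε))
      filter_upwards [this] with k hk using hk
    have E3 : ∀ᶠ k in atTop, 3 * R ≤ h k := hh.eventually (eventually_ge_atTop (3 * R))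
    filter_upwards [E1, E2, E3] with k h1 h2 h3 x hx
    set t := h k - R with htdef
    have hmem1 : x + h k ∈ Icc (-2 * t) (-t) ∪ Icc t (2 * t) := by
      right; constructor <;> simp only [htdef] <;> [linarith [hx.1]; linarith [hx.2]]
    have hmem2 : h k ∈ Icc (-2 * t) (-t) ∪ Icc t (2 * t) := by
      right; constructor <;> simp only [htdef] <;> linarith
    have tri : ‖f (x + h k) - g‖ ≤
        ‖f (x + h k) - f (h k)‖ + ‖f (h k) - g‖ := by
      have : f (x + h k) - g = (f (x + h k) - f (h k)) + (f (h k) - g) := by ring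
      rw [this]; exact norm_add_le _ _
    have hosc := le_osc f M hM hmem1 hmem2
    linarith
end

section
/- The function p_L(x) = α + sin(log(log|x|) · χ_{|x| ≥ e}(x)) on ℝ, with α > 2, is continuous, satisfies 1 < inf p_L and sup p_L < ∞, belongs to the class SO of slowly oscillating functions, but does not have equal limits at ±∞ in the sense that lim inf_{x→+∞} p_L(x) = α - 1 < α + 1 = lim sup_{x→+∞} p_L(x); in particular p_L ∉ C(ℝ̇). -/
open Filter Set

/-- Oscillation of a real function on a set. -/
noncomputable def oscR (f : ℝ → ℝ) (J : Set ℝ) : ℝ :=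
  ⨆ t ∈ J, ⨆ τ ∈ J, |f t - f τ|

/-- Sine is 1-Lipschitz. -/
lemma abs_sin_sub_sin_le_abs (a b : ℝ) : |Real.sin a - Real.sin b| ≤ |a - b| := by
  rw [Real.sin_sub_sin]
  have h1 : |Real.sin ((a - b) / 2)| ≤ |(a - b) / 2| := Real.abs_sin_le_abs
  have h2 : |Real.cos ((a + b) / 2)| ≤ 1 := Real.abs_cos_le_one _
  have h3 : |(a - b) / 2| = |a - b| / 2 := by rw [abs_div, abs_two]
  calc |2 * Real.sin ((a - b) / 2) * Real.cos ((a + b) / 2)|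
      = 2 * |Real.sin ((a - b) / 2)| * |Real.cos ((a + b) / 2)| := by
        rw [abs_mul, abs_mul, abs_two]
    _ ≤ 2 * |(a - b) / 2| * 1 := by
        apply mul_le_mul _ h2 (abs_nonneg _) (by positivity)
        nlinarith [abs_nonneg (Real.sin ((a - b) / 2))]
    _ = |a - b| := by rw [h3]; ring

/-- Lerner's exponent `p_L(x) = α + sin(log(log|x|)·χ_{|x|≥e}(x))` with `α > 2` is
continuous, has infimum `α - 1 > 1` and bounded above, is slowly oscillating, but
has `liminf_{x→+∞} p_L = α - 1 < α + 1 = limsup_{x→+∞} p_L`; in particular it has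
no limit at `+∞`, so `p_L ∉ C(ℝ̇)`. -/
theorem lerner_exponent_SO (α : ℝ) (hα : 2 < α)
    (pL : ℝ → ℝ)
    (hpL : ∀ x : ℝ, pL x =
      α + Real.sin (Set.indicator {y : ℝ | Real.exp 1 ≤ |y|}
        (fun y => Real.log (Real.log |y|)) x)) :
    Continuous pL ∧
    (1 < ⨅ x : ℝ, pL x) ∧
    BddAbove (Set.range pL) ∧
    Tendsto (fun x : ℝ => oscR pL (Icc (-2*x) (-x) ∪ Icc x (2*x))) atTop (nhds 0) ∧
    Filter.liminf pL atTop = α - 1 ∧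
    Filter.limsup pL atTop = α + 1 ∧
    α - 1 < α + 1 ∧
    ¬ ∃ L : ℝ, Tendsto pL atTop (nhds L) := by
  -- basic bounds
  have hub : ∀ x, pL x ≤ α + 1 := by
    intro x; rw [hpL x]
    linarith [Real.sin_le_one (Set.indicator {y : ℝ | Real.exp 1 ≤ |y|}
      (fun y => Real.log (Real.log |y|)) x)]
  have hlb : ∀ x, α - 1 ≤ pL x := by
    intro x; rw [hpL x]
    linarith [Real.neg_one_le_sin (Set.indicator {y : ℝ | Real.exp 1 ≤ |y|}
      (fun y => Real.log (Real.log |y|)) x)]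
  -- continuity
  have hcont : Continuous pL := by
    have hind : ∀ x : ℝ, Set.indicator {y : ℝ | Real.exp 1 ≤ |y|}
        (fun y => Real.log (Real.log |y|)) x
        = Real.log (Real.log (max (Real.exp 1) |x|)) := by
      intro x
      by_cases hx : Real.exp 1 ≤ |x|
      · rw [Set.indicator_of_mem (show x ∈ {y : ℝ | Real.exp 1 ≤ |y|} from hx), max_eq_right hx]
      · rw [Set.indicator_of_notMem (show x ∉ {y : ℝ | Real.exp 1 ≤ |y|} from hx), max_eq_left (le_of_not_ge hx), Real.log_exp,
          Real.log_one]
    have h1 : Continuous fun x : ℝ => max (Real.exp 1) |x| :=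
      continuous_const.max continuous_abs
    have hpos1 : ∀ x : ℝ, (0:ℝ) < max (Real.exp 1) |x| :=
      fun x => lt_of_lt_of_le (Real.exp_pos 1) (le_max_left _ _)
    have h2 : Continuous fun x : ℝ => Real.log (max (Real.exp 1) |x|) :=
      h1.log fun x => ne_of_gt (hpos1 x)
    have hpos2 : ∀ x : ℝ, (0:ℝ) < Real.log (max (Real.exp 1) |x|) := by
      intro x
      calc (0:ℝ) < 1 := one_pos
        _ = Real.log (Real.exp 1) := (Real.log_exp 1).symm
        _ ≤ Real.log (max (Real.exp 1) |x|) :=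
          (Real.log_le_log_iff (Real.exp_pos 1) (hpos1 x)).2 (le_max_left _ _)
    have h3 : Continuous fun x : ℝ => Real.log (Real.log (max (Real.exp 1) |x|)) :=
      h2.log fun x => ne_of_gt (hpos2 x)
    have : pL = fun x => α + Real.sin (Real.log (Real.log (max (Real.exp 1) |x|))) := by
      funext x; rw [hpL x, hind x]
    rw [this]
    exact continuous_const.add (Real.continuous_sin.comp h3)
  -- oscillation bound
  have oscnn : ∀ x : ℝ, 0 ≤ oscR pL (Icc (-2*x) (-x) ∪ Icc x (2*x)) := by
    intro x
    exact Real.iSup_nonneg fun t => Real.iSup_nonneg fun _ =>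
      Real.iSup_nonneg fun τ => Real.iSup_nonneg fun _ => abs_nonneg _
  have oscle : ∀ x : ℝ, Real.exp 1 ≤ x →
      oscR pL (Icc (-2*x) (-x) ∪ Icc x (2*x)) ≤ Real.log 2 / Real.log x := by
    intro x hx
    have hx0 : (0:ℝ) < x := lt_of_lt_of_le (Real.exp_pos 1) hx
    have hlogx : (1:ℝ) ≤ Real.log x := (Real.le_log_iff_exp_le hx0).2 hx
    have hlogxpos : (0:ℝ) < Real.log x := by linarith
    have h2x0 : (0:ℝ) < 2 * x := by linarith
    have hlog2x : Real.log (2*x) = Real.log 2 + Real.log x :=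
      Real.log_mul two_ne_zero (ne_of_gt hx0)
    have hlog2xpos : (0:ℝ) < Real.log (2*x) := by
      have := Real.log_nonneg (by norm_num : (1:ℝ) ≤ 2); linarith
    have hdivnn : (0:ℝ) ≤ Real.log 2 / Real.log x :=
      div_nonneg (Real.log_nonneg (by norm_num)) (le_of_lt hlogxpos)
    have habs : ∀ t : ℝ, t ∈ Icc (-2*x) (-x) ∪ Icc x (2*x) → x ≤ |t| ∧ |t| ≤ 2*x := by
      intro t ht
      rcases ht with ht | ht
      · obtain ⟨h1, h2⟩ := ht
        have : |t| = -t := abs_of_neg (by nlinarith)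
        constructor <;> [linarith [this]; linarith [this]]
      · obtain ⟨h1, h2⟩ := ht
        have : |t| = t := abs_of_pos (by linarith)
        constructor <;> [linarith [this]; linarith [this]]
    have key : ∀ t ∈ Icc (-2*x) (-x) ∪ Icc x (2*x), ∀ τ ∈ Icc (-2*x) (-x) ∪ Icc x (2*x),
        |pL t - pL τ| ≤ Real.log 2 / Real.log x := by
      intro t ht τ hτ
      obtain ⟨ht1, ht2⟩ := habs t ht
      obtain ⟨hτ1, hτ2⟩ := habs τ hτ
      have hte : Real.exp 1 ≤ |t| := le_trans hx ht1
      have hτe : Real.exp 1 ≤ |τ| := le_trans hx hτ1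
      have hplt : pL t = α + Real.sin (Real.log (Real.log |t|)) := by
        rw [hpL t, Set.indicator_of_mem (show t ∈ {y : ℝ | Real.exp 1 ≤ |y|} from hte)]
      have hplτ : pL τ = α + Real.sin (Real.log (Real.log |τ|)) := by
        rw [hpL τ, Set.indicator_of_mem (show τ ∈ {y : ℝ | Real.exp 1 ≤ |y|} from hτe)]
      -- bounds on log log
      have hb : ∀ s : ℝ, x ≤ |s| → |s| ≤ 2*x →
          Real.log (Real.log x) ≤ Real.log (Real.log |s|) ∧
          Real.log (Real.log |s|) ≤ Real.log (Real.log (2*x)) := by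
        intro s hs1 hs2
        have hls1 : Real.log x ≤ Real.log |s| :=
          (Real.log_le_log_iff hx0 (by linarith)).2 hs1
        have hls2 : Real.log |s| ≤ Real.log (2*x) :=
          (Real.log_le_log_iff (by linarith) h2x0).2 hs2
        constructor
        · exact (Real.log_le_log_iff hlogxpos (by linarith)).2 hls1
        · exact (Real.log_le_log_iff (by linarith) (by linarith)).2 hls2
      obtain ⟨hta, htb⟩ := hb t ht1 ht2
      obtain ⟨hτa, hτb⟩ := hb τ hτ1 hτ2
      have hdiff : |Real.log (Real.log |t|) - Real.log (Real.log |τ|)| ≤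
          Real.log (Real.log (2*x)) - Real.log (Real.log x) := by
        rw [abs_le]; constructor <;> linarith
      have hbound : Real.log (Real.log (2*x)) - Real.log (Real.log x)
          ≤ Real.log 2 / Real.log x := by
        have hq : Real.log (Real.log (2*x)) - Real.log (Real.log x)
            = Real.log (Real.log (2*x) / Real.log x) :=
          (Real.log_div (ne_of_gt hlog2xpos) (ne_of_gt hlogxpos)).symm
        have hqpos : (0:ℝ) < Real.log (2*x) / Real.log x := div_pos hlog2xpos hlogxpos
        have := Real.log_le_sub_one_of_pos hqpos
        rw [hq]
        have heq : Real.log (2*x) / Real.log x - 1 = Real.log 2 / Real.log x := by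
          field_simp [hlog2x]; linarith
        linarith [heq ▸ this]
      calc |pL t - pL τ|
          = |Real.sin (Real.log (Real.log |t|)) - Real.sin (Real.log (Real.log |τ|))| := by
            rw [hplt, hplτ]; ring_nf
        _ ≤ |Real.log (Real.log |t|) - Real.log (Real.log |τ|)| :=
            abs_sin_sub_sin_le_abs _ _
        _ ≤ Real.log (Real.log (2*x)) - Real.log (Real.log x) := hdiff
        _ ≤ Real.log 2 / Real.log x := hbound
    unfold oscR
    exact Real.iSup_le (fun t => Real.iSup_le (fun ht => Real.iSup_le (fun τ =>
      Real.iSup_le (fun hτ => key t ht τ hτ) hdivnn) hdivnn) hdivnn) hdivnn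
  have hosc : Tendsto (fun x : ℝ => oscR pL (Icc (-2*x) (-x) ∪ Icc x (2*x))) atTop (nhds 0) := by
    apply squeeze_zero' (Eventually.of_forall oscnn)
      ((eventually_ge_atTop (Real.exp 1)).mono fun x hx => oscle x hx)
    exact Tendsto.div_atTop tendsto_const_nhds Real.tendsto_log_atTop
  -- frequently attains α - 1 and α + 1
  have hπ : (0:ℝ) < Real.pi := Real.pi_pos
  have hfreq : ∀ c : ℝ, (∀ n : ℕ, Real.sin (c + n * (2 * Real.pi)) = Real.sin c) →
      -Real.pi ≤ c → ∃ᶠ x in atTop, pL x = α + Real.sin c := by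
    intro c hc hcge
    rw [frequently_atTop]
    intro b
    obtain ⟨n, hn⟩ := exists_nat_ge ((max b 0 + Real.pi) / (2 * Real.pi))
    set r : ℝ := c + n * (2 * Real.pi) with hr_def
    have h2π : (0:ℝ) < 2 * Real.pi := by linarith
    have hn' : max b 0 + Real.pi ≤ n * (2 * Real.pi) := by
      rw [div_le_iff₀ h2π] at hn; linarith
    have hr1 : max b 0 ≤ r := by
      have := le_max_right b (0:ℝ); simp only [hr_def]; linarith
    have hr0 : (0:ℝ) ≤ r := le_trans (le_max_right _ _) hr1
    have hrb : b ≤ r := le_trans (le_max_left _ _) hr1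
    set X := Real.exp (Real.exp r) with hX_def
    have hXpos : (0:ℝ) < X := Real.exp_pos _
    have h1 : r + 1 ≤ Real.exp r := Real.add_one_le_exp r
    have h2 : Real.exp r + 1 ≤ X := Real.add_one_le_exp _
    have hXb : b ≤ X := by linarith
    have habsX : |X| = X := abs_of_pos hXpos
    have hXe : Real.exp 1 ≤ |X| := by
      rw [habsX]; exact Real.exp_le_exp.2 (by linarith)
    refine ⟨X, hXb, ?_⟩
    rw [hpL X, Set.indicator_of_mem (show X ∈ {y : ℝ | Real.exp 1 ≤ |y|} from hXe), habsX, Real.log_exp, Real.log_exp, hr_def, hc]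
  have hfreq_lo : ∃ᶠ x in atTop, pL x ≤ α - 1 := by
    have := hfreq (-(Real.pi/2)) (fun n => Real.sin_add_nat_mul_two_pi _ n) (by linarith)
    refine this.mono fun x hx => ?_
    rw [hx, Real.sin_neg, Real.sin_pi_div_two]
    linarith
  have hfreq_hi : ∃ᶠ x in atTop, α + 1 ≤ pL x := by
    have := hfreq (Real.pi/2) (fun n => Real.sin_add_nat_mul_two_pi _ n) (by linarith)
    refine this.mono fun x hx => ?_
    rw [hx, Real.sin_pi_div_two]
  have hbdd_le : IsBoundedUnder (· ≤ ·) atTop pL := isBoundedUnder_of ⟨α + 1, hub⟩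
  have hbdd_ge : IsBoundedUnder (· ≥ ·) atTop pL := isBoundedUnder_of ⟨α - 1, hlb⟩
  have hliminf : Filter.liminf pL atTop = α - 1 :=
    le_antisymm (liminf_le_of_frequently_le hfreq_lo hbdd_ge)
      (le_liminf_of_le hbdd_le.isCoboundedUnder_ge (Eventually.of_forall hlb))
  have hlimsup : Filter.limsup pL atTop = α + 1 :=
    le_antisymm (limsup_le_of_le hbdd_ge.isCoboundedUnder_le (Eventually.of_forall hub))
      (le_limsup_of_frequently_le hfreq_hi hbdd_le)
  refine ⟨hcont, ?_, ⟨α + 1, ?_⟩, hosc, hliminf, hlimsup, by linarith, ?_⟩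
  · have : α - 1 ≤ ⨅ x : ℝ, pL x := le_ciInf hlb
    linarith
  · rintro y ⟨x, rfl⟩; exact hub x
  · rintro ⟨L, hL⟩
    have h1 := hL.liminf_eq
    have h2 := hL.limsup_eq
    rw [hliminf] at h1
    rw [hlimsup] at h2
    linarith
end

section
/- Suppose p : ℝ → (1,∞) is slowly oscillating with 1 < p₋ := inf p ≤ sup p =: p₊ < ∞. Let (h_k) tend to +∞ with p(h_k) → q. Suppose w and w_k are continuous on ℝ, w_k → w pointwise with uniform convergence on compact sets, and there is C > 0 with |w(x)| ≤ C/(1+|x|) and |w_k(x)| ≤ C/(1+|x|) for all k and x. Then for every λ > 0, ∫_ℝ |w_k(x)/λ|^{p(x+h_k)} dx → ∫_ℝ |w(x)/λ|^q dx as k → ∞. -/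
open Filter Set MeasureTheory

lemma abs_sub_le_oscR {p : ℝ → ℝ} {J : Set ℝ} {M : ℝ} (hM : ∀ a b, |p a - p b| ≤ M)
    {t τ : ℝ} (ht : t ∈ J) (hτ : τ ∈ J) : |p t - p τ| ≤ oscR p J := by
  have hM0 : 0 ≤ M := (abs_nonneg _).trans (hM t t)
  have inner_le : ∀ t', (⨆ τ' ∈ J, |p t' - p τ'|) ≤ M := fun t' =>
    Real.iSup_le (fun τ' => Real.iSup_le (fun _ => hM _ _) hM0) hM0
  have h1 : |p t - p τ| ≤ ⨆ τ' ∈ J, |p t - p τ'| := by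
    have hb : BddAbove (range fun τ' => ⨆ _ : τ' ∈ J, |p t - p τ'|) := by
      refine ⟨M, ?_⟩
      rintro _ ⟨τ', rfl⟩
      exact Real.iSup_le (fun _ => hM _ _) hM0
    calc |p t - p τ| = ⨆ _ : τ ∈ J, |p t - p τ| :=
          (ciSup_pos (f := fun _ => |p t - p τ|) hτ).symm
      _ ≤ ⨆ τ' ∈ J, |p t - p τ'| := le_ciSup hb τ
  refine h1.trans ?_
  have hb : BddAbove (range fun t' => ⨆ _ : t' ∈ J, ⨆ τ' ∈ J, |p t' - p τ'|) := by
    refine ⟨M, ?_⟩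
    rintro _ ⟨t', rfl⟩
    exact Real.iSup_le (fun _ => inner_le _) hM0
  calc (⨆ τ' ∈ J, |p t - p τ'|) = ⨆ _ : t ∈ J, ⨆ τ' ∈ J, |p t - p τ'| :=
        (ciSup_pos (f := fun _ => ⨆ τ' ∈ J, |p t - p τ'|) ht).symm
    _ ≤ oscR p J := le_ciSup hb t

/-- If `p` is slowly oscillating with `1 < inf p ≤ sup p < ∞`, `h k → +∞` with
`p (h k) → q`, `w_k → w` uniformly on compact sets, and `|w|, |w_k| ≤ C/(1+|x|)`,
then `∫_ℝ |w_k(x)/λ|^{p(x+h_k)} dx → ∫_ℝ |w(x)/λ|^q dx` for every `λ > 0`. -/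
theorem modular_convergence
    (p : ℝ → ℝ) (hpcont : Continuous p)
    (pm pP : ℝ) (hpm : 1 < pm) (hlb : ∀ x, pm ≤ p x) (hub : ∀ x, p x ≤ pP)
    (hSO : Tendsto (fun x : ℝ => oscR p (Icc (-2*x) (-x) ∪ Icc x (2*x))) atTop (nhds 0))
    (h : ℕ → ℝ) (hh : Tendsto h atTop atTop)
    (q : ℝ) (hq : Tendsto (fun k => p (h k)) atTop (nhds q))
    (w : ℝ → ℂ) (wk : ℕ → ℝ → ℂ)
    (hwc : Continuous w) (hwkc : ∀ k, Continuous (wk k))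
    (hunif : ∀ J : Set ℝ, IsCompact J → TendstoUniformlyOn (fun k x => wk k x) w atTop J)
    (C : ℝ) (hC : 0 < C)
    (hwbd : ∀ x, ‖w x‖ ≤ C / (1 + |x|))
    (hwkbd : ∀ k x, ‖wk k x‖ ≤ C / (1 + |x|))
    (lam : ℝ) (hlam : 0 < lam) :
    Tendsto (fun k => ∫ x : ℝ, (‖wk k x‖ / lam) ^ p (x + h k))
      atTop (nhds (∫ x : ℝ, (‖w x‖ / lam) ^ q)) := by
  have hpm0 : (0:ℝ) < pm := lt_trans one_pos hpm
  have hpmP : pm ≤ pP := (hlb 0).trans (hub 0)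
  have hq_lb : pm ≤ q := ge_of_tendsto' hq (fun k => hlb _)
  have hq0 : 0 < q := lt_of_lt_of_le hpm0 hq_lb
  have hM : ∀ a b, |p a - p b| ≤ pP - pm := by
    intro a b
    rw [abs_sub_le_iff]
    constructor <;> · linarith [hlb a, hub a, hlb b, hub b]
  -- pointwise convergence of exponents
  have hexp : ∀ x : ℝ, Tendsto (fun k => p (x + h k)) atTop (nhds q) := by
    intro x
    have hy : Tendsto (fun k => h k - (|x| + 1)) atTop atTop := by
      simpa [sub_eq_add_neg] using tendsto_atTop_add_const_right atTop (-(|x| + 1)) hh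
    have hosc : Tendsto (fun k => oscR p
        (Icc (-2*(h k - (|x| + 1))) (-(h k - (|x| + 1))) ∪
          Icc (h k - (|x| + 1)) (2*(h k - (|x| + 1))))) atTop (nhds 0) := hSO.comp hy
    have hbd : ∀ᶠ k in atTop, |p (x + h k) - p (h k)| ≤ oscR p
        (Icc (-2*(h k - (|x| + 1))) (-(h k - (|x| + 1))) ∪
          Icc (h k - (|x| + 1)) (2*(h k - (|x| + 1)))) := by
      filter_upwards [hh.eventually_ge_atTop (3*|x| + 2)] with k hk
      refine abs_sub_le_oscR hM ?_ ?_
      · refine mem_union_right _ ?_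
        constructor <;> nlinarith [le_abs_self x, neg_abs_le x, abs_nonneg x]
      · refine mem_union_right _ ?_
        constructor <;> nlinarith [le_abs_self x, neg_abs_le x, abs_nonneg x]
    have h0 : Tendsto (fun k => p (x + h k) - p (h k)) atTop (nhds 0) :=
      squeeze_zero_norm' (by simpa [Real.norm_eq_abs] using hbd) hosc
    have := h0.add hq
    simpa using this
  -- pointwise convergence of the base
  have hbase : ∀ x : ℝ, Tendsto (fun k => ‖wk k x‖ / lam) atTop
      (nhds (‖w x‖ / lam)) := by
    intro x
    have hpt : Tendsto (fun k => wk k x) atTop (nhds (w x)) :=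
      (hunif {x} isCompact_singleton).tendsto_at (mem_singleton x)
    exact ((continuous_norm.tendsto _).comp hpt).div_const lam
  -- pointwise convergence of the integrands
  have hlim : ∀ x : ℝ, Tendsto (fun k => (‖wk k x‖ / lam) ^ p (x + h k)) atTop
      (nhds ((‖w x‖ / lam) ^ q)) := by
    intro x
    have hca : ContinuousAt (fun r : ℝ × ℝ => r.1 ^ r.2) (‖w x‖ / lam, q) :=
      Real.continuousAt_rpow _ (Or.inr hq0)
    exact hca.tendsto.comp ((hbase x).prodMk_nhds (hexp x))
  -- the dominating function
  set B : ℝ := max (C / lam) 1 with hBdef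
  have hB1 : (1:ℝ) ≤ B := le_max_right _ _
  have hB0 : (0:ℝ) ≤ B := zero_le_one.trans hB1
  set D : ℝ := B ^ (pP - pm) * B ^ pm with hDdef
  have hBpow : (1:ℝ) ≤ B ^ (pP - pm) := Real.one_le_rpow hB1 (by linarith)
  -- key pointwise bound
  have key : ∀ (a e x : ℝ), 0 ≤ a → a ≤ B / (1 + |x|) → pm ≤ e → e ≤ pP →
      a ^ e ≤ D * (1 + |x|) ^ (-pm) := by
    intro a e x ha0 hab hpme hepP
    have hx1 : (0:ℝ) < 1 + |x| := by positivity
    have hbB : B / (1 + |x|) ≤ B := by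
      apply div_le_self hB0
      linarith [abs_nonneg x]
    have hbp : (B / (1 + |x|)) ^ pm = B ^ pm * (1 + |x|) ^ (-pm) := by
      rw [Real.div_rpow hB0 hx1.le, Real.rpow_neg hx1.le, div_eq_mul_inv]
    have hgoal : a ^ e ≤ B ^ (pP - pm) * (B / (1 + |x|)) ^ pm := by
      rcases le_or_gt a 1 with hle1 | hgt1
      · have step1 : a ^ e ≤ a ^ pm := by
          rcases eq_or_lt_of_le ha0 with h0 | hpos
          · rw [← h0, Real.zero_rpow (by linarith), Real.zero_rpow (by linarith)]
          · exact Real.rpow_le_rpow_of_exponent_ge hpos hle1 hpme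
        have step2 : a ^ pm ≤ (B / (1 + |x|)) ^ pm :=
          Real.rpow_le_rpow ha0 hab hpm0.le
        calc a ^ e ≤ (B / (1 + |x|)) ^ pm := step1.trans step2
          _ ≤ B ^ (pP - pm) * (B / (1 + |x|)) ^ pm :=
            le_mul_of_one_le_left (Real.rpow_nonneg (by positivity) _) hBpow
      · have hapos : (0:ℝ) < a := lt_trans one_pos hgt1
        have step1 : a ^ e ≤ a ^ pP := Real.rpow_le_rpow_of_exponent_le hgt1.le hepP
        have step2 : a ^ pP = a ^ (pP - pm) * a ^ pm := by
          rw [← Real.rpow_add hapos, sub_add_cancel]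
        calc a ^ e ≤ a ^ pP := step1
          _ = a ^ (pP - pm) * a ^ pm := step2
          _ ≤ B ^ (pP - pm) * (B / (1 + |x|)) ^ pm := by
            apply mul_le_mul
            · exact Real.rpow_le_rpow ha0 (hab.trans hbB) (by linarith)
            · exact Real.rpow_le_rpow ha0 hab hpm0.le
            · exact Real.rpow_nonneg ha0 _
            · exact Real.rpow_nonneg hB0 _
    calc a ^ e ≤ B ^ (pP - pm) * (B / (1 + |x|)) ^ pm := hgoal
      _ = D * (1 + |x|) ^ (-pm) := by rw [hbp, hDdef]; ring
  -- integrability of the bound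
  have hboundint : Integrable (fun x : ℝ => D * (1 + |x|) ^ (-pm)) := by
    have h1 : Integrable (fun x : ℝ => (1 + ‖x‖) ^ (-pm)) (volume : Measure ℝ) := by
      apply integrable_one_add_norm
      simp only [Module.finrank_self]
      exact_mod_cast hpm
    have h2 : Integrable (fun x : ℝ => (1 + |x|) ^ (-pm)) (volume : Measure ℝ) := by
      simpa only [Real.norm_eq_abs] using h1
    exact h2.const_mul D
  -- measurability of the integrands
  have hmeas : ∀ k, AEStronglyMeasurable
      (fun x : ℝ => (‖wk k x‖ / lam) ^ p (x + h k)) volume := by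
    intro k
    have : Continuous fun x : ℝ => (‖wk k x‖ / lam) ^ p (x + h k) := by
      rw [continuous_iff_continuousAt]
      intro x
      exact ContinuousAt.rpow
        (((continuous_norm.comp (hwkc k)).div_const lam).continuousAt)
        ((hpcont.comp (continuous_id.add continuous_const)).continuousAt)
        (Or.inr (lt_of_lt_of_le hpm0 (hlb _)))
    exact this.aestronglyMeasurable
  -- the bound holds
  have hbound : ∀ k, ∀ᵐ x : ℝ ∂(volume), ‖(‖wk k x‖ / lam) ^ p (x + h k)‖ ≤
      D * (1 + |x|) ^ (-pm) := by
    intro k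
    refine ae_of_all _ fun x => ?_
    have ha0 : (0:ℝ) ≤ ‖wk k x‖ / lam := by positivity
    rw [Real.norm_eq_abs, abs_of_nonneg (Real.rpow_nonneg ha0 _)]
    refine key _ _ x ha0 ?_ (hlb _) (hub _)
    have hx1 : (0:ℝ) < 1 + |x| := by positivity
    have : ‖wk k x‖ / lam ≤ (C / (1 + |x|)) / lam :=
      div_le_div_of_nonneg_right (hwkbd k x) hlam.le
    calc ‖wk k x‖ / lam ≤ (C / (1 + |x|)) / lam := this
      _ = (C / lam) / (1 + |x|) := by ring
      _ ≤ B / (1 + |x|) := by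
        apply div_le_div_of_nonneg_right (le_max_left _ _) hx1.le
  exact tendsto_integral_of_dominated_convergence _ hmeas hboundint hbound
    (ae_of_all _ hlim)
end

section
/- Suppose p : ℝ → (1,∞) is slowly oscillating with 1 < inf p ≤ sup p < ∞. Let (h_k) tend to +∞ with p(h_k) → q ∈ (1,∞). Suppose w, w_k are continuous, w_k → w uniformly on compact sets, and |w(x)|, |w_k(x)| ≤ C/(1+|x|) for some C > 0 and all k, x. Then ‖V_{h_k} w_k‖_{p(·)} → ‖w‖_{L^q(ℝ)} as k → ∞, where (V_h f)(x) := f(x-h) and ‖·‖_{p(·)} is the Luxemburg norm on the variable Lebesgue space L^{p(·)}(ℝ). -/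
open Filter Set MeasureTheory

/-- The modular `I_{p(·)}(f) = ∫ |f(x)|^{p(x)} dx` of the variable Lebesgue space. -/
noncomputable def vlModular (p : ℝ → ℝ) (f : ℝ → ℂ) : ENNReal :=
  ∫⁻ x : ℝ, ENNReal.ofReal (‖f x‖ ^ p x)

/-- The Luxemburg norm `‖f‖_{p(·)} = inf{λ > 0 : I_{p(·)}(f/λ) ≤ 1}`. -/
noncomputable def luxNorm (p : ℝ → ℝ) (f : ℝ → ℂ) : ℝ :=
  sInf {l : ℝ | 0 < l ∧ vlModular p (fun x => f x / (l : ℂ)) ≤ 1}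

lemma oscR_ge {f : ℝ → ℝ} {J : Set ℝ} {M : ℝ}
    (hM : ∀ t ∈ J, ∀ τ ∈ J, |f t - f τ| ≤ M) {t τ : ℝ} (ht : t ∈ J) (hτ : τ ∈ J) :
    |f t - f τ| ≤ oscR f J := by
  have hM0 : (0:ℝ) ≤ max M 0 := le_max_right _ _
  have hinner : ∀ t' : ℝ, (⨆ τ' ∈ J, |f t' - f τ'|) ≤ max M 0 ∨ t' ∉ J := by
    intro t'
    by_cases ht' : t' ∈ J
    · left
      refine Real.iSup_le (fun τ' => ?_) hM0
      by_cases hτ' : τ' ∈ J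
      · rw [ciSup_pos hτ']
        exact le_max_of_le_left (hM t' ht' τ' hτ')
      · simp [hτ', Real.iSup_of_isEmpty, hM0]
    · right; exact ht'
  -- inner bound at t
  have hbdd_inner : BddAbove (range fun τ' => ⨆ _ : τ' ∈ J, |f t - f τ'|) := by
    refine ⟨max M 0, ?_⟩
    rintro x ⟨τ', rfl⟩
    show (⨆ _ : τ' ∈ J, |f t - f τ'|) ≤ max M 0
    by_cases hτ' : τ' ∈ J
    · rw [ciSup_pos hτ']
      exact le_max_of_le_left (hM t ht τ' hτ')
    · simp [hτ', hM0]
  have h1 : |f t - f τ| ≤ ⨆ τ' ∈ J, |f t - f τ'| := by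
    have := le_ciSup hbdd_inner τ
    rwa [ciSup_pos hτ] at this
  have hbdd_outer : BddAbove (range fun t' => ⨆ _ : t' ∈ J, ⨆ τ' ∈ J, |f t' - f τ'|) := by
    refine ⟨max M 0, ?_⟩
    rintro x ⟨t', rfl⟩
    show (⨆ _ : t' ∈ J, ⨆ τ' ∈ J, |f t' - f τ'|) ≤ max M 0
    by_cases ht' : t' ∈ J
    · rw [ciSup_pos ht']
      rcases hinner t' with h | h
      · exact h
      · exact absurd ht' h
    · simp [ht', hM0]
  have h2 : (⨆ τ' ∈ J, |f t - f τ'|) ≤ oscR f J := by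
    have := le_ciSup hbdd_outer t
    rwa [ciSup_pos ht] at this
  exact h1.trans h2




lemma exp_unif (p : ℝ → ℝ) (pm pP : ℝ) (hlb : ∀ x, pm ≤ p x) (hub : ∀ x, p x ≤ pP)
    (hSO : Tendsto (fun x : ℝ => oscR p (Icc (-2*x) (-x) ∪ Icc x (2*x))) atTop (nhds 0))
    (h : ℕ → ℝ) (hh : Tendsto h atTop atTop)
    (q : ℝ) (hq : Tendsto (fun k => p (h k)) atTop (nhds q))
    (R : ℝ) (hR : 0 ≤ R) {ε : ℝ} (hε : 0 < ε) :
    ∀ᶠ k in atTop, ∀ x ∈ Icc (-R) R, |p (x + h k) - q| < ε := by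
  have hosc : ∀ᶠ y in (atTop : Filter ℝ),
      oscR p (Icc (-2*y) (-y) ∪ Icc y (2*y)) < ε/2 :=
    hSO.eventually_lt_const (half_pos hε)
  obtain ⟨Y, hY⟩ := eventually_atTop.1 hosc
  have hq' : ∀ᶠ k in atTop, |p (h k) - q| < ε/2 := by
    have := hq.eventually (Metric.ball_mem_nhds q (half_pos hε))
    filter_upwards [this] with k hk
    simpa [Real.dist_eq] using hk
  filter_upwards [hh.eventually_ge_atTop (max (3*R) (Y+R)), hq'] with k hk hk2 x hx
  set y := h k - R with hy
  have h3R : 3*R ≤ h k := le_trans (le_max_left _ _) hk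
  have hYy : Y ≤ y := by
    have := le_trans (le_max_right _ _) hk; simp only [hy]; linarith
  have hMbd : ∀ t ∈ Icc (-2*y) (-y) ∪ Icc y (2*y), ∀ τ ∈ Icc (-2*y) (-y) ∪ Icc y (2*y),
      |p t - p τ| ≤ pP - pm := by
    intro t _ τ _
    rw [abs_sub_le_iff]
    constructor <;> [skip; skip] <;> have := hlb t <;> have := hub t <;>
      have := hlb τ <;> have := hub τ <;> linarith
  have hmem1 : x + h k ∈ Icc y (2*y) := by
    constructor
    · simp only [hy]; cases hx with | intro h1 h2 => linarith
    · simp only [hy]; cases hx with | intro h1 h2 => linarith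
  have hmem2 : h k ∈ Icc y (2*y) := by
    constructor
    · simp only [hy]; linarith
    · simp only [hy]; linarith
  have hosc_le : |p (x + h k) - p (h k)| ≤ oscR p (Icc (-2*y) (-y) ∪ Icc y (2*y)) :=
    oscR_ge hMbd (Or.inr hmem1) (Or.inr hmem2)
  have := hY y hYy
  calc |p (x + h k) - q| ≤ |p (x + h k) - p (h k)| + |p (h k) - q| := abs_sub_le _ _ _
    _ < ε/2 + ε/2 := by exact add_lt_add (lt_of_le_of_lt hosc_le this) hk2
    _ = ε := add_halves ε


lemma unif_approx
    (p : ℝ → ℝ) (pm pP : ℝ) (hpm : 1 < pm) (hlb : ∀ x, pm ≤ p x) (hub : ∀ x, p x ≤ pP)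
    (h : ℕ → ℝ) (q : ℝ) (hqm : pm ≤ q) (hqP : q ≤ pP)
    (w : ℝ → ℂ) (wk : ℕ → ℝ → ℂ)
    (R : ℝ) (hR : 0 ≤ R)
    (hunifIcc : TendstoUniformlyOn (fun k x => wk k x) w atTop (Icc (-R) R))
    (hexp : ∀ {ε : ℝ}, 0 < ε → ∀ᶠ k in atTop, ∀ x ∈ Icc (-R) R, |p (x + h k) - q| < ε)
    (C : ℝ) (hC : 0 < C)
    (hwbd : ∀ x, ‖w x‖ ≤ C / (1 + |x|))
    (hwkbd : ∀ k x, ‖wk k x‖ ≤ C / (1 + |x|))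
    (l : ℝ) (hl : 0 < l) {ε : ℝ} (hε : 0 < ε) :
    ∀ᶠ k in atTop, ∀ x ∈ Icc (-R) R,
      |(‖wk k x‖ / l) ^ p (x + h k) - (‖w x‖ / l) ^ q| ≤ ε := by
  set A := C / l with hA
  have hA0 : 0 < A := div_pos hC hl
  set K : Set (ℝ × ℝ) := Icc (0:ℝ) A ×ˢ Icc pm pP with hK
  have hKc : IsCompact K := isCompact_Icc.prod isCompact_Icc
  have hφ : ContinuousOn (fun z : ℝ × ℝ => z.1 ^ z.2) K := by
    intro z hz
    refine (Real.continuousAt_rpow z (Or.inr ?_)).continuousWithinAt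
    exact lt_of_lt_of_le (lt_trans zero_lt_one hpm) hz.2.1
  have huc := hKc.uniformContinuousOn_of_continuous hφ
  rw [Metric.uniformContinuousOn_iff] at huc
  obtain ⟨δ, hδ0, hδ⟩ := huc ε hε
  -- abs bound : ‖v‖ ≤ C for v satisfying the decay bound
  have habs : ∀ z : ℂ, ∀ x : ℝ, ‖z‖ ≤ C / (1 + |x|) → ‖z‖ / l ≤ A := by
    intro z x hz
    calc ‖z‖ / l ≤ (C / (1 + |x|)) / l := by gcongr
      _ ≤ C / l :=
          div_le_div_of_nonneg_right (div_le_self hC.le (le_add_of_nonneg_right (abs_nonneg x))) hl.le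
  have hu : ∀ᶠ k in atTop, ∀ x ∈ Icc (-R) R, dist (w x) (wk k x) < δ * l :=
    (Metric.tendstoUniformlyOn_iff.1 hunifIcc) (δ*l) (by positivity)
  filter_upwards [hu, hexp hδ0] with k hk1 hk2 x hx
  set a1 := ‖wk k x‖ / l with ha1
  set a2 := ‖w x‖ / l with ha2
  have hmem1 : (a1, p (x + h k)) ∈ K := ⟨⟨by positivity, habs _ x (hwkbd k x)⟩, hlb _, hub _⟩
  have hmem2 : (a2, q) ∈ K := ⟨⟨by positivity, habs _ x (hwbd x)⟩, hqm, hqP⟩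
  have hdist : dist ((a1, p (x+h k)) : ℝ × ℝ) (a2, q) < δ := by
    rw [Prod.dist_eq]; apply max_lt
    · rw [Real.dist_eq]
      have h1 : |‖wk k x‖ - ‖w x‖| ≤ ‖wk k x - w x‖ := by
        simpa using abs_norm_sub_norm_le (wk k x) (w x)
      calc |a1 - a2| = |‖wk k x‖ - ‖w x‖| / l := by
            rw [ha1, ha2, div_sub_div_same, abs_div, abs_of_pos hl]
        _ ≤ ‖wk k x - w x‖ / l := by gcongr
        _ < δ := by
            rw [div_lt_iff₀ hl]
            calc ‖wk k x - w x‖ = dist (wk k x) (w x) := (dist_eq_norm _ _).symm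
              _ = dist (w x) (wk k x) := dist_comm _ _
              _ < δ * l := hk1 x hx
    · rw [Real.dist_eq]; exact hk2 x hx
  have hfin := hδ _ hmem1 _ hmem2 hdist
  rw [Real.dist_eq] at hfin
  exact hfin.le


lemma lintegral_conv_of_unif
    (G : ℕ → ℝ → ℝ) (g : ℝ → ℝ)
    (hGc : ∀ k, Continuous (G k)) (hgc : Continuous g)
    (hg0 : ∀ x, 0 ≤ g x)
    (R : ℝ) (hR : 0 ≤ R)
    (happrox : ∀ {ε : ℝ}, 0 < ε → ∀ᶠ k in atTop, ∀ x ∈ Icc (-R) R, |G k x - g x| ≤ ε)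
    (hfin : ∫⁻ x in Icc (-R) R, ENNReal.ofReal (g x) ≠ ⊤) :
    Tendsto (fun k => ∫⁻ x in Icc (-R) R, ENNReal.ofReal (G k x)) atTop
      (nhds (∫⁻ x in Icc (-R) R, ENNReal.ofReal (g x))) := by
  set b := ∫⁻ x in Icc (-R) R, ENNReal.ofReal (g x) with hb
  rw [ENNReal.tendsto_nhds hfin]
  intro ε hε
  -- pick a real e with 0 < e and ofReal e ≤ ε
  obtain ⟨e, he0, hee⟩ : ∃ e : ℝ, 0 < e ∧ ENNReal.ofReal e ≤ ε := by
    rcases eq_or_ne ε ⊤ with hT | hT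
    · exact ⟨1, one_pos, hT ▸ le_top⟩
    · exact ⟨ε.toReal, ENNReal.toReal_pos hε.ne' hT, by rw [ENNReal.ofReal_toReal hT]⟩
  set e' := e / (2*R+1) with he'
  have he'0 : 0 < e' := by positivity
  have hvol : (ENNReal.ofReal e') * volume (Icc (-R) R) ≤ ENNReal.ofReal e := by
    rw [Real.volume_Icc, ← ENNReal.ofReal_mul he'0.le]
    apply ENNReal.ofReal_le_ofReal
    rw [he', div_mul_eq_mul_div, div_le_iff₀ (by positivity)]
    nlinarith [he0.le, hR]
  filter_upwards [happrox he'0] with k hk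
  have hub : (∫⁻ x in Icc (-R) R, ENNReal.ofReal (G k x)) ≤ b + ε := by
    calc (∫⁻ x in Icc (-R) R, ENNReal.ofReal (G k x))
        ≤ ∫⁻ x in Icc (-R) R, (ENNReal.ofReal (g x) + ENNReal.ofReal e') := by
          refine setLIntegral_mono (by fun_prop) (fun x hx => ?_)
          calc ENNReal.ofReal (G k x) ≤ ENNReal.ofReal (g x + e') := by
                apply ENNReal.ofReal_le_ofReal
                have := hk x hx; have := abs_le.1 this; linarith [this.1, this.2]
            _ ≤ ENNReal.ofReal (g x) + ENNReal.ofReal e' := ENNReal.ofReal_add_le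
      _ = b + (ENNReal.ofReal e') * volume (Icc (-R) R) := by
          rw [lintegral_add_right _ measurable_const, setLIntegral_const]
      _ ≤ b + ENNReal.ofReal e := add_le_add_right hvol _
      _ ≤ b + ε := add_le_add_right hee _
  have hlbd : b ≤ (∫⁻ x in Icc (-R) R, ENNReal.ofReal (G k x)) + ε := by
    calc b ≤ ∫⁻ x in Icc (-R) R, (ENNReal.ofReal (G k x) + ENNReal.ofReal e') := by
          refine setLIntegral_mono (by fun_prop) (fun x hx => ?_)
          calc ENNReal.ofReal (g x) ≤ ENNReal.ofReal (G k x + e') := by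
                apply ENNReal.ofReal_le_ofReal
                have := abs_le.1 (hk x hx); linarith [this.1, this.2]
            _ ≤ ENNReal.ofReal (G k x) + ENNReal.ofReal e' := ENNReal.ofReal_add_le
      _ = (∫⁻ x in Icc (-R) R, ENNReal.ofReal (G k x))
            + (ENNReal.ofReal e') * volume (Icc (-R) R) := by
          rw [lintegral_add_right _ measurable_const, setLIntegral_const]
      _ ≤ _ := add_le_add_right (hvol.trans hee) _
  exact ⟨tsub_le_iff_right.2 hlbd, hub⟩


lemma rpow_dom {C l pm pP : ℝ} (hC : 0 < C) (hl : 0 < l) (hpm : 0 < pm)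
    {pp : ℝ} (hppm : pm ≤ pp) (hpP : pp ≤ pP) {b x : ℝ} (hb0 : 0 ≤ b)
    (hb : b ≤ (C / l) / (1 + |x|)) :
    b ^ pp ≤ (max (C/l) 1) ^ pP * (1 + |x|) ^ (-pm) := by
  set A := max (C/l) 1 with hA
  have hA1 : (1:ℝ) ≤ A := le_max_right _ _
  have hy1 : (1:ℝ) ≤ 1 + |x| := le_add_of_nonneg_right (abs_nonneg x)
  have hy0 : (0:ℝ) < 1 + |x| := lt_of_lt_of_le one_pos hy1
  have hpp0 : 0 ≤ pp := le_trans hpm.le hppm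
  calc b ^ pp ≤ ((C/l) / (1 + |x|)) ^ pp := Real.rpow_le_rpow hb0 hb hpp0
    _ = (C/l) ^ pp / (1 + |x|) ^ pp := Real.div_rpow (by positivity) hy0.le _
    _ ≤ A ^ pP / (1 + |x|) ^ pm := by
        apply div_le_div₀ (by positivity) ?_ (Real.rpow_pos_of_pos hy0 pm) ?_
        · calc (C/l) ^ pp ≤ A ^ pp := Real.rpow_le_rpow (by positivity) (le_max_left _ _) hpp0
            _ ≤ A ^ pP := Real.rpow_le_rpow_of_exponent_le hA1 hpP
        · exact Real.rpow_le_rpow_of_exponent_le hy1 hppm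
    _ = A ^ pP * (1 + |x|) ^ (-pm) := by
        rw [Real.rpow_neg hy0.le, div_eq_mul_inv]

lemma dom_integrable {pm : ℝ} (hpm : 1 < pm) :
    Integrable (fun x : ℝ => (1 + |x|) ^ (-pm)) := by
  simpa [Real.norm_eq_abs] using integrable_one_add_norm (E := ℝ) (by simpa)

lemma tail_tendsto (D : ℝ → ℝ) (hDc : Continuous D)
    (hfin : ∫⁻ x, ENNReal.ofReal (D x) ≠ ⊤) :
    Tendsto (fun n : ℕ => ∫⁻ x in (Icc (-(n:ℝ)) n)ᶜ, ENNReal.ofReal (D x)) atTop (nhds 0) := by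
  have key : Tendsto
      (fun n : ℕ => ∫⁻ x, ((Icc (-(n:ℝ)) n)ᶜ).indicator (fun x => ENNReal.ofReal (D x)) x)
      atTop (nhds (∫⁻ _ : ℝ, 0)) := by
    apply tendsto_lintegral_of_dominated_convergence (fun x => ENNReal.ofReal (D x))
    · intro n
      exact ((ENNReal.continuous_ofReal.comp hDc).measurable).indicator
        measurableSet_Icc.compl
    · intro n
      exact Filter.Eventually.of_forall (fun x => indicator_le_self _ _ x)
    · exact hfin
    · apply Filter.Eventually.of_forall
      intro a
      apply tendsto_const_nhds.congr'
      filter_upwards [eventually_ge_atTop (⌈|a|⌉₊)] with n hn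
      have : a ∈ Icc (-(n:ℝ)) n := by
        have h1 : |a| ≤ (n:ℝ) := le_trans (Nat.le_ceil _) (by exact_mod_cast hn)
        have := abs_le.1 h1
        exact ⟨this.1, this.2⟩
      simp [indicator_apply, this]
  simp only [lintegral_zero] at key
  apply key.congr
  intro n
  rw [lintegral_indicator measurableSet_Icc.compl]


lemma compact_exhaust (D : ℝ → ℝ) (hDc : Continuous D)
    (hfin : ∫⁻ x, ENNReal.ofReal (D x) ≠ ⊤) :
    Tendsto (fun n : ℕ => ∫⁻ x in Icc (-(n:ℝ)) n, ENNReal.ofReal (D x)) atTop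
      (nhds (∫⁻ x, ENNReal.ofReal (D x))) := by
  have key : Tendsto
      (fun n : ℕ => ∫⁻ x, (Icc (-(n:ℝ)) n).indicator (fun x => ENNReal.ofReal (D x)) x)
      atTop (nhds (∫⁻ x, ENNReal.ofReal (D x))) := by
    apply tendsto_lintegral_of_dominated_convergence (fun x => ENNReal.ofReal (D x))
    · intro n
      exact ((ENNReal.continuous_ofReal.comp hDc).measurable).indicator measurableSet_Icc
    · intro n
      exact Filter.Eventually.of_forall (fun x => indicator_le_self _ _ x)
    · exact hfin
    · apply Filter.Eventually.of_forall
      intro a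
      apply tendsto_const_nhds.congr'
      filter_upwards [eventually_ge_atTop (⌈|a|⌉₊)] with n hn
      have hmem : a ∈ Icc (-(n:ℝ)) n := by
        have h1 : |a| ≤ (n:ℝ) := le_trans (Nat.le_ceil _) (by exact_mod_cast hn)
        have := abs_le.1 h1
        exact ⟨this.1, this.2⟩
      simp [indicator_apply, hmem]
  apply key.congr
  intro n
  rw [lintegral_indicator measurableSet_Icc]

lemma rpow_dom_small {C l pm : ℝ} (hC : 0 < C) (hl : 0 < l) (hpm : 0 < pm)
    {pp : ℝ} (hppm : pm ≤ pp) (hCl : C / l ≤ 1) {b x : ℝ} (hb0 : 0 ≤ b)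
    (hb : b ≤ (C/l)/(1 + |x|)) :
    b ^ pp ≤ (C/l) ^ pm * (1 + |x|) ^ (-pm) := by
  have hy1 : (1:ℝ) ≤ 1 + |x| := le_add_of_nonneg_right (abs_nonneg x)
  have hy0 : (0:ℝ) < 1 + |x| := lt_of_lt_of_le one_pos hy1
  have hrhs : (C/l) ^ pm * (1 + |x|) ^ (-pm) = ((C/l)/(1 + |x|)) ^ pm := by
    rw [Real.div_rpow (by positivity) hy0.le, Real.rpow_neg hy0.le, div_eq_mul_inv]
    ring
  rw [hrhs]
  rcases eq_or_lt_of_le hb0 with hb' | hb'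
  · rw [← hb', Real.zero_rpow (lt_of_lt_of_le hpm hppm).ne']
    positivity
  · have hb1 : b ≤ 1 := hb.trans ((div_le_self (by positivity) hy1).trans hCl)
    calc b ^ pp ≤ b ^ pm := Real.rpow_le_rpow_of_exponent_ge hb' hb1 hppm
      _ ≤ ((C/l)/(1 + |x|)) ^ pm := Real.rpow_le_rpow hb0 hb hpm.le

set_option maxHeartbeats 1000000 in
/-- Key lemma: if `p : ℝ → (1,∞)` is slowly oscillating with `1 < inf p ≤ sup p < ∞`,
`h k → +∞` with `p (h k) → q ∈ (1,∞)`, `w_k → w` uniformly on compact sets and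
`|w|, |w_k| ≤ C/(1+|x|)`, then `‖V_{h_k} w_k‖_{p(·)} → ‖w‖_{L^q(ℝ)}`,
where `(V_h f)(x) = f(x-h)`. -/
theorem key_lemma_translation_norms
    (p : ℝ → ℝ) (hpcont : Continuous p)
    (pm pP : ℝ) (hpm : 1 < pm) (hlb : ∀ x, pm ≤ p x) (hub : ∀ x, p x ≤ pP)
    (hSO : Tendsto (fun x : ℝ => oscR p (Icc (-2*x) (-x) ∪ Icc x (2*x))) atTop (nhds 0))
    (h : ℕ → ℝ) (hh : Tendsto h atTop atTop)
    (q : ℝ) (hq1 : 1 < q) (hq : Tendsto (fun k => p (h k)) atTop (nhds q))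
    (w : ℝ → ℂ) (wk : ℕ → ℝ → ℂ)
    (hwc : Continuous w) (hwkc : ∀ k, Continuous (wk k))
    (hunif : ∀ J : Set ℝ, IsCompact J → TendstoUniformlyOn (fun k x => wk k x) w atTop J)
    (C : ℝ) (hC : 0 < C)
    (hwbd : ∀ x, ‖w x‖ ≤ C / (1 + |x|))
    (hwkbd : ∀ k x, ‖wk k x‖ ≤ C / (1 + |x|)) :
    Tendsto (fun k => luxNorm p (fun x => wk k (x - h k))) atTop
      (nhds ((∫ x : ℝ, ‖w x‖ ^ q) ^ (1 / q))) := by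
  have hpm0 : (0:ℝ) < pm := lt_trans one_pos hpm
  have hq0 : (0:ℝ) < q := lt_trans one_pos hq1
  have hqm : pm ≤ q := ge_of_tendsto' hq (fun k => hlb (h k))
  have hqP : q ≤ pP := le_of_tendsto' hq (fun k => hub (h k))
  set M : ℕ → ℝ → ENNReal :=
    fun k l => ∫⁻ x, ENNReal.ofReal ((‖wk k x‖ / l) ^ p (x + h k)) with hM
  have hMeq : ∀ k : ℕ, ∀ l : ℝ, 0 < l →
      vlModular p (fun x => wk k (x - h k) / (l:ℂ)) = M k l := by
    intro k l hl
    have habs : ∀ y : ℂ, ‖y / (l:ℂ)‖ = ‖y‖ / l := by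
      intro y; rw [norm_div, Complex.norm_real, Real.norm_eq_abs, abs_of_pos hl]
    have hshift := lintegral_add_right_eq_self (μ := volume)
      (fun x => ENNReal.ofReal ((‖wk k (x - h k)‖ / l) ^ p x)) (h k)
    simp only [add_sub_cancel_right] at hshift
    simp only [vlModular, hM]
    simp_rw [habs]
    exact hshift.symm
  set S : ℕ → Set ℝ := fun k => {l : ℝ | 0 < l ∧ M k l ≤ 1} with hS
  have hlux : ∀ k, luxNorm p (fun x => wk k (x - h k)) = sInf (S k) := by
    intro k
    unfold luxNorm
    congr 1
    ext l
    simp only [hS, mem_setOf_eq]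
    constructor
    · rintro ⟨h1, h2⟩; exact ⟨h1, by rw [← hMeq k l h1]; exact h2⟩
    · rintro ⟨h1, h2⟩; exact ⟨h1, by rw [hMeq k l h1]; exact h2⟩
  have hGcont : ∀ k (l : ℝ), Continuous (fun x => (‖wk k x‖ / l) ^ p (x + h k)) := by
    intro k l
    apply Continuous.rpow ((continuous_norm.comp (hwkc k)).div_const l)
      (hpcont.comp (continuous_id.add continuous_const))
    intro x; exact Or.inr (lt_of_lt_of_le hpm0 (hlb _))
  have hgcont : ∀ l : ℝ, Continuous (fun x => (‖w x‖ / l) ^ q) := by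
    intro l
    apply Continuous.rpow ((continuous_norm.comp hwc).div_const l) continuous_const
    intro x; exact Or.inr hq0
  have hwk_div : ∀ k x (l:ℝ), 0 < l → ‖wk k x‖ / l ≤ (C/l) / (1+|x|) := by
    intro k x l hl
    have heq : (C/l)/(1+|x|) = (C/(1+|x|))/l := by ring
    rw [heq]
    exact div_le_div_of_nonneg_right (hwkbd k x) hl.le
  have hdom : ∀ k x (l:ℝ), 0 < l →
      (‖wk k x‖ / l) ^ p (x + h k) ≤ (max (C/l) 1) ^ pP * (1+|x|) ^ (-pm) :=
    fun k x l hl =>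
      rpow_dom hC hl hpm0 (hlb _) (hub _) (by positivity) (hwk_div k x l hl)
  have hTint : Integrable (fun x : ℝ => (1+|x|) ^ (-pm)) := dom_integrable hpm
  have hDfin : ∀ A : ℝ, 0 ≤ A →
      (∫⁻ x, ENNReal.ofReal (A * (1+|x|) ^ (-pm))) ≠ ⊤ := by
    intro A hA
    rw [← ofReal_integral_eq_lintegral_ofReal (hTint.const_mul A)
      (Eventually.of_forall fun x => by positivity)]
    exact ENNReal.ofReal_ne_top
  have hwq_bound : ∀ x, ‖w x‖ ^ q ≤ (max C 1) ^ pP * (1+|x|) ^ (-pm) := by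
    intro x
    have h1 : ‖w x‖ ≤ (C/1)/(1+|x|) := by rw [div_one]; exact hwbd x
    have h2 := rpow_dom (C:=C) (l:=1) hC one_pos hpm0 hqm hqP (norm_nonneg _) h1
    simpa using h2
  have hwq_int : Integrable (fun x => ‖w x‖ ^ q) := by
    apply Integrable.mono' (hTint.const_mul ((max C 1) ^ pP))
    · exact ((continuous_norm.comp hwc).rpow_const
        (fun x => Or.inr hq0.le)).aestronglyMeasurable
    · apply Eventually.of_forall; intro x
      rw [Real.norm_eq_abs, abs_of_nonneg (by positivity)]
      exact hwq_bound x
  set Iq := ∫ x, ‖w x‖ ^ q with hIq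
  have hIq0 : 0 ≤ Iq := integral_nonneg (fun x => by positivity)
  set lam := Iq ^ (1/q) with hlam
  have hlam0 : 0 ≤ lam := Real.rpow_nonneg hIq0 _
  have hlamq : lam ^ q = Iq := by
    rw [hlam, ← Real.rpow_mul hIq0, one_div, inv_mul_cancel₀ hq0.ne', Real.rpow_one]
  have hmw : Measurable fun x => ENNReal.ofReal (‖w x‖ ^ q) :=
    (ENNReal.continuous_ofReal.comp ((continuous_norm.comp hwc).rpow_const
      (fun x => Or.inr hq0.le))).measurable
  have hLq : ∀ l : ℝ, 0 < l →
      (∫⁻ x, ENNReal.ofReal ((‖w x‖ / l) ^ q)) = ENNReal.ofReal (Iq / l ^ q) := by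
    intro l hl
    have hlq : (0:ℝ) < l ^ q := Real.rpow_pos_of_pos hl q
    have hpt : ∀ x, (‖w x‖ / l) ^ q = (l ^ q)⁻¹ * ‖w x‖ ^ q := by
      intro x; rw [Real.div_rpow (norm_nonneg _) hl.le]; ring
    simp_rw [hpt]
    calc ∫⁻ x, ENNReal.ofReal ((l^q)⁻¹ * ‖w x‖ ^ q)
        = ∫⁻ x, ENNReal.ofReal ((l^q)⁻¹) * ENNReal.ofReal (‖w x‖ ^ q) := by
          simp_rw [ENNReal.ofReal_mul (by positivity : (0:ℝ) ≤ (l^q)⁻¹)]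
      _ = ENNReal.ofReal ((l^q)⁻¹) * ∫⁻ x, ENNReal.ofReal (‖w x‖ ^ q) :=
          lintegral_const_mul _ hmw
      _ = ENNReal.ofReal ((l^q)⁻¹) * ENNReal.ofReal Iq := by
          rw [← ofReal_integral_eq_lintegral_ofReal hwq_int
            (Eventually.of_forall fun x => by positivity)]
      _ = ENNReal.ofReal ((l^q)⁻¹ * Iq) := (ENNReal.ofReal_mul (by positivity)).symm
      _ = ENNReal.ofReal (Iq / l^q) := by rw [mul_comm, ← div_eq_mul_inv]
  -- nonempty admissible set, uniformly in k
  obtain ⟨l0, hl0pos, hl0adm⟩ : ∃ l0 : ℝ, 0 < l0 ∧ ∀ k, M k l0 ≤ 1 := by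
    set T := ∫ x : ℝ, (1+|x|) ^ (-pm) with hT
    have hT0 : 0 ≤ T := integral_nonneg fun x => by positivity
    have h1 : Tendsto (fun l : ℝ => C / l) atTop (nhds 0) := by
      simpa using (tendsto_const_nhds (x := C)).div_atTop tendsto_id
    have h2 : Tendsto (fun l : ℝ => (C / l) ^ pm) atTop (nhds 0) := by
      have h3 := (Real.continuousAt_rpow_const 0 pm (Or.inr hpm0.le)).tendsto.comp h1
      simpa [Function.comp_def, Real.zero_rpow hpm0.ne'] using h3
    obtain ⟨l0, hl0C, hl0small⟩ : ∃ l0 : ℝ, max C 1 ≤ l0 ∧ (C / l0) ^ pm < 1/(T+1) :=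
      ((eventually_ge_atTop (max C 1)).and
        (h2.eventually_lt_const (by positivity))).exists
    have hl0pos : 0 < l0 := lt_of_lt_of_le (lt_max_of_lt_right one_pos) hl0C
    refine ⟨l0, hl0pos, fun k => ?_⟩
    have hCl : C / l0 ≤ 1 := (div_le_one hl0pos).2 (le_trans (le_max_left _ _) hl0C)
    have hptw : ∀ x, (‖wk k x‖ / l0) ^ p (x + h k) ≤ (C/l0)^pm * (1+|x|)^(-pm) :=
      fun x => rpow_dom_small hC hl0pos hpm0 (hlb _) hCl (by positivity)
        (hwk_div k x l0 hl0pos)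
    calc M k l0 ≤ ∫⁻ x, ENNReal.ofReal ((C/l0)^pm * (1+|x|)^(-pm)) :=
          lintegral_mono fun x => ENNReal.ofReal_le_ofReal (hptw x)
      _ = ENNReal.ofReal ((C/l0)^pm * T) := by
          rw [← ofReal_integral_eq_lintegral_ofReal (hTint.const_mul _)
            (Eventually.of_forall fun x => by positivity), hT, integral_const_mul]
      _ ≤ 1 := by
          rw [← ENNReal.ofReal_one]
          apply ENNReal.ofReal_le_ofReal
          have h4 : (C/l0)^pm * T ≤ (1/(T+1)) * T :=
            mul_le_mul_of_nonneg_right hl0small.le hT0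
          have h5 : (1/(T+1)) * T ≤ 1 := by
            rw [div_mul_eq_mul_div, one_mul, div_le_one (by linarith)]; linarith
          linarith
  have hMmono : ∀ k {l l' : ℝ}, 0 < l → l ≤ l' → M k l' ≤ M k l := by
    intro k l l' hl hll'
    have hl' : 0 < l' := lt_of_lt_of_le hl hll'
    apply lintegral_mono; intro x
    apply ENNReal.ofReal_le_ofReal
    apply Real.rpow_le_rpow (div_nonneg (norm_nonneg _) hl'.le) ?_
      (le_trans hpm0.le (hlb _))
    rw [div_eq_mul_inv, div_eq_mul_inv]
    exact mul_le_mul_of_nonneg_left (one_div l ▸ one_div l' ▸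
      one_div_le_one_div_of_le hl hll') (norm_nonneg _)
  have hcompconv : ∀ (l : ℝ), 0 < l → ∀ n : ℕ,
      Tendsto (fun k => ∫⁻ x in Icc (-(n:ℝ)) n,
          ENNReal.ofReal ((‖wk k x‖/l) ^ p (x + h k))) atTop
        (nhds (∫⁻ x in Icc (-(n:ℝ)) n, ENNReal.ofReal ((‖w x‖/l) ^ q))) := by
    intro l hl n
    apply lintegral_conv_of_unif _ _ (fun k => hGcont k l) (hgcont l)
      (fun x => by positivity) _ (Nat.cast_nonneg n)
    · intro ε hε
      exact unif_approx p pm pP hpm hlb hub h q hqm hqP w wk _ (Nat.cast_nonneg n)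
        (hunif _ isCompact_Icc)
        (fun {ε'} hε' => exp_unif p pm pP hlb hub hSO h hh q hq _ (Nat.cast_nonneg n) hε')
        C hC hwbd hwkbd l hl hε
    · exact ne_top_of_le_ne_top ENNReal.ofReal_ne_top
        (le_trans (setLIntegral_le_lintegral _ _) (hLq l hl).le)
  -- Part A : l > lam implies eventually modular ≤ 1
  have partA : ∀ l : ℝ, lam < l → ∀ᶠ k in atTop, M k l ≤ 1 := by
    intro l hl
    have hlpos : 0 < l := lt_of_le_of_lt hlam0 hl
    have hm1 : Iq / l^q < 1 := by
      rw [div_lt_one (Real.rpow_pos_of_pos hlpos q)]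
      calc Iq = lam ^ q := hlamq.symm
        _ < l ^ q := Real.rpow_lt_rpow hlam0 hl hq0
    have hm0 : 0 ≤ Iq / l^q := div_nonneg hIq0 (Real.rpow_pos_of_pos hlpos q).le
    set δ := (1 - Iq / l^q)/4 with hδdef
    have hδ0 : 0 < δ := by rw [hδdef]; linarith
    set A := (max (C/l) 1) ^ pP with hA
    have hA0 : 0 ≤ A := by positivity
    have htail := tail_tendsto (fun x => A * (1+|x|)^(-pm))
      (continuous_const.mul ((continuous_const.add continuous_abs).rpow_const fun x => Or.inl (ne_of_gt (by show (0:ℝ) < 1 + |x|; positivity)))) (hDfin A hA0)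
    obtain ⟨n, hn⟩ := (htail.eventually_lt_const (ENNReal.ofReal_pos.2 hδ0)).exists
    set bR := ∫⁻ x in Icc (-(n:ℝ)) n, ENNReal.ofReal ((‖w x‖/l) ^ q) with hbR
    have hbRle : bR ≤ ENNReal.ofReal (Iq / l^q) :=
      le_trans (setLIntegral_le_lintegral _ _) (hLq l hlpos).le
    have hbRne : bR ≠ ⊤ := ne_top_of_le_ne_top ENNReal.ofReal_ne_top hbRle
    have hlt : bR < bR + ENNReal.ofReal δ :=
      ENNReal.lt_add_right hbRne (ENNReal.ofReal_pos.2 hδ0).ne'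
    filter_upwards [(hcompconv l hlpos n).eventually_lt_const hlt] with k hk
    have hmtail : Measurable fun x => ENNReal.ofReal (A * (1+|x|)^(-pm)) := by
      exact (ENNReal.continuous_ofReal.comp (continuous_const.mul ((continuous_const.add continuous_abs).rpow_const fun x => Or.inl (ne_of_gt (by show (0:ℝ) < 1 + |x|; positivity))))).measurable
    have htail_k : (∫⁻ x in (Icc (-(n:ℝ)) n)ᶜ,
        ENNReal.ofReal ((‖wk k x‖/l) ^ p (x + h k))) ≤ ENNReal.ofReal δ := by
      refine le_trans (setLIntegral_mono hmtail
        (fun x _ => ENNReal.ofReal_le_ofReal (hdom k x l hlpos))) hn.le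
    calc M k l = (∫⁻ x in Icc (-(n:ℝ)) n,
            ENNReal.ofReal ((‖wk k x‖/l) ^ p (x + h k)))
          + (∫⁻ x in (Icc (-(n:ℝ)) n)ᶜ,
            ENNReal.ofReal ((‖wk k x‖/l) ^ p (x + h k))) :=
          (lintegral_add_compl _ measurableSet_Icc).symm
      _ ≤ (bR + ENNReal.ofReal δ) + ENNReal.ofReal δ := add_le_add hk.le htail_k
      _ ≤ (ENNReal.ofReal (Iq / l^q) + ENNReal.ofReal δ) + ENNReal.ofReal δ := by gcongr
      _ = ENNReal.ofReal ((Iq / l^q + δ) + δ) := by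
          rw [ENNReal.ofReal_add (by linarith) hδ0.le, ENNReal.ofReal_add hm0 hδ0.le]
      _ ≤ 1 := by
          rw [← ENNReal.ofReal_one]
          exact ENNReal.ofReal_le_ofReal (by rw [hδdef]; linarith)
  -- Part B : 0 < l < lam implies eventually modular > 1
  have partB : ∀ l : ℝ, 0 < l → l < lam → ∀ᶠ k in atTop, 1 < M k l := by
    intro l hlpos hllam
    have hv1 : 1 < Iq / l^q := by
      rw [lt_div_iff₀ (Real.rpow_pos_of_pos hlpos q), one_mul]
      calc l^q < lam^q := Real.rpow_lt_rpow hlpos.le hllam hq0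
        _ = Iq := hlamq
    have hfin : (∫⁻ x, ENNReal.ofReal ((‖w x‖/l) ^ q)) ≠ ⊤ := by
      rw [hLq l hlpos]; exact ENNReal.ofReal_ne_top
    have hexh := compact_exhaust (fun x => (‖w x‖/l) ^ q) (hgcont l) hfin
    have hv1' : (1:ENNReal) < ∫⁻ x, ENNReal.ofReal ((‖w x‖/l) ^ q) := by
      rw [hLq l hlpos, ← ENNReal.ofReal_one]
      exact (ENNReal.ofReal_lt_ofReal_iff (by linarith)).2 hv1
    obtain ⟨n, hn⟩ := (hexh.eventually_const_lt hv1').exists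
    filter_upwards [(hcompconv l hlpos n).eventually_const_lt hn] with k hk
    exact lt_of_lt_of_le hk (setLIntegral_le_lintegral _ _)
  -- final assembly
  have hgoal : (fun k => luxNorm p (fun x => wk k (x - h k))) = fun k => sInf (S k) :=
    funext hlux
  rw [hgoal]
  rw [tendsto_order]
  constructor
  · intro a ha
    rcases lt_or_ge a 0 with ha0 | ha0
    · exact Eventually.of_forall fun k =>
        lt_of_lt_of_le ha0 (Real.sInf_nonneg fun l hl => hl.1.le)
    · set l := (a + lam)/2 with hldef
      have hal : a < l := by rw [hldef]; linarith
      have hllam : l < lam := by rw [hldef]; linarith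
      have hlpos : 0 < l := lt_of_le_of_lt ha0 hal
      filter_upwards [partB l hlpos hllam] with k hk
      apply lt_of_lt_of_le hal
      have hne : (S k).Nonempty := ⟨l0, hl0pos, hl0adm k⟩
      apply le_csInf hne
      rintro b ⟨hb0, hbM⟩
      by_contra hcon
      push_neg at hcon
      have h6 : M k l ≤ M k b := hMmono k hb0 hcon.le
      exact absurd hbM (not_le.2 (lt_of_lt_of_le hk h6))
  · intro b hb
    set l := (lam + b)/2 with hldef
    have h1 : lam < l := by rw [hldef]; linarith
    have h2 : l < b := by rw [hldef]; linarith
    have hlpos : 0 < l := lt_of_le_of_lt hlam0 h1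
    filter_upwards [partA l h1] with k hk
    exact lt_of_le_of_lt (csInf_le ⟨0, fun x hx => hx.1.le⟩ ⟨hlpos, hk⟩) h2
end
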